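/- Let G be a group acting on a set E by bijections (equivalently, G ≤ Sym(E)), where the support of g is Supp(g) = {x ∈ E : g(x) ≠ x}. Suppose that for all non-identity elements f₁, f₂, f₃ ∈ G there exists f₄ ∈ G such that (S·f₄·f₃) ∩ (S·f₄) = ∅ where S = Supp(f₁) ∪ Supp(f₂). Then the commutator subgroup G' of G is simple (Higman's simplicity criterion). -/

import Mathlib

private lemma perm_displace {E : Type*} (h f : Equiv.Perm E) (SS : Set E)
    (he : (⇑h '' (⇑f '' SS)) ∩ (⇑f '' SS) = ∅) :
    ∀ x ∈ SS, (f⁻¹ * h * f) x ∉ SS := by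
  intro x hx hmem
  have h1 : h (f x) ∈ (⇑h '' (⇑f '' SS)) :=
    Set.mem_image_of_mem _ (Set.mem_image_of_mem _ hx)
  have h2 : h (f x) ∈ (⇑f '' SS) := by
    refine ⟨(f⁻¹ * h * f) x, hmem, ?_⟩
    simp [Equiv.Perm.mul_apply]
  exact Set.eq_empty_iff_forall_notMem.mp he (h (f x)) ⟨h1, h2⟩

private lemma perm_key {E : Type*} (p q k : Equiv.Perm E) (SS : Set E)
    (hk : ∀ x ∈ SS, k x ∉ SS)
    (hp : ∀ x, p x ≠ x → x ∈ SS)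
    (hq : ∀ x, q x ≠ x → x ∈ SS) :
    p * q * p⁻¹ * q⁻¹ = (p*k*p⁻¹*k⁻¹) * q * (p*k*p⁻¹*k⁻¹)⁻¹ * q⁻¹ := by
  have hdis : (k * p⁻¹ * k⁻¹).Disjoint q := by
    intro x
    by_cases hqx : q x = x
    · exact Or.inr hqx
    · refine Or.inl ?_
      have hxS : x ∈ SS := hq x hqx
      have hks : k⁻¹ x ∉ SS := by
        intro hmem
        exact hk _ hmem (by simpa using hxS)
      have hpk : p (k⁻¹ x) = k⁻¹ x := by
        by_contra hne
        exact hks (hp _ hne)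
      have hpi : p⁻¹ (k⁻¹ x) = k⁻¹ x := by
        conv_lhs => rw [← hpk]
        simp
      rw [Equiv.Perm.mul_apply, Equiv.Perm.mul_apply, hpi]; simp
  have hcomm : (k * p⁻¹ * k⁻¹) * q = q * (k * p⁻¹ * k⁻¹) := hdis.commute.eq
  have hconj : (k * p⁻¹ * k⁻¹) * q * (k * p⁻¹ * k⁻¹)⁻¹ = q := by
    rw [hcomm]; group
  have hre : (p*k*p⁻¹*k⁻¹) * q * (p*k*p⁻¹*k⁻¹)⁻¹ * q⁻¹
      = p * ((k * p⁻¹ * k⁻¹) * q * (k * p⁻¹ * k⁻¹)⁻¹) * p⁻¹ * q⁻¹ := by group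
  rw [hre, hconj]

/-- Higman's simplicity criterion: if `G` is a group of bijections of a set `E`
such that for all nonidentity `f₁ f₂ f₃ ∈ G` there is `f₄ ∈ G` with
`(S·f₄·f₃) ∩ (S·f₄) = ∅` where `S = Supp f₁ ∪ Supp f₂`, then the commutator
subgroup of `G` is simple (every normal subgroup is trivial or everything). -/
theorem higman_simplicity_criterion {E : Type*} (G : Subgroup (Equiv.Perm E))
    (hyp : ∀ f₁ f₂ f₃ : Equiv.Perm E, f₁ ∈ G → f₂ ∈ G → f₃ ∈ G →
      f₁ ≠ 1 → f₂ ≠ 1 → f₃ ≠ 1 →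
      ∃ f₄ ∈ G,
        (⇑f₃ '' (⇑f₄ '' ({x | f₁ x ≠ x} ∪ {x | f₂ x ≠ x}))) ∩
          (⇑f₄ '' ({x | f₁ x ≠ x} ∪ {x | f₂ x ≠ x})) = ∅) :
    ∀ N : Subgroup ↥(commutator ↥G), N.Normal → N = ⊥ ∨ N = ⊤ := by
  intro N hN
  rcases N.bot_or_exists_ne_one with hbot | ⟨h₀, hh₀N, hh₀ne⟩
  · exact Or.inl hbot
  right
  set h' : ↥G := (h₀ : ↥G) with hh'def
  have hh'mem : h' ∈ commutator ↥G := h₀.2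
  have hh'ne : h' ≠ 1 := fun he => hh₀ne (Subtype.ext he)
  have hh'Pne : (h' : Equiv.Perm E) ≠ 1 := fun he => hh'ne (Subtype.ext he)
  -- D : normal closure of h' under conjugation by commutator elements
  set gens : Set ↥G := {x | ∃ γ ∈ commutator ↥G, γ * h' * γ⁻¹ = x} with hgens
  set D : Subgroup ↥G := Subgroup.closure gens with hD
  have hh'D : h' ∈ D := Subgroup.subset_closure ⟨1, Subgroup.one_mem _, by group⟩
  have hconjD : ∀ c ∈ commutator ↥G, ∀ x ∈ D, c * x * c⁻¹ ∈ D := by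
    intro c hc x hx
    induction hx using Subgroup.closure_induction with
    | mem y hy =>
      obtain ⟨γ, hγ, rfl⟩ := hy
      refine Subgroup.subset_closure ⟨c * γ, Subgroup.mul_mem _ hc hγ, by group⟩
    | one => simpa using D.one_mem
    | mul y z _ _ ihy ihz =>
      have e : c * (y * z) * c⁻¹ = (c * y * c⁻¹) * (c * z * c⁻¹) := by group
      rw [e]; exact D.mul_mem ihy ihz
    | inv y _ ihy =>
      have e : c * y⁻¹ * c⁻¹ = (c * y * c⁻¹)⁻¹ := by group
      rw [e]; exact D.inv_mem ihy
  -- claim 2 : all commutators [g, h'] lie in D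
  have claim2 : ∀ g : ↥G, g * h' * g⁻¹ * h'⁻¹ ∈ D := by
    intro g
    by_cases hg1 : g = 1
    · subst hg1
      have e : (1 : ↥G) * h' * 1⁻¹ * h'⁻¹ = 1 := by group
      rw [e]; exact D.one_mem
    have hgPne : (g : Equiv.Perm E) ≠ 1 := fun he => hg1 (Subtype.ext he)
    obtain ⟨f₄, hf₄G, hemp⟩ :=
      hyp (g : Equiv.Perm E) (h' : Equiv.Perm E) (h' : Equiv.Perm E)
        g.2 h'.2 h'.2 hgPne hh'Pne hh'Pne
    set SS : Set E :=
      {x | (g : Equiv.Perm E) x ≠ x} ∪ {x | (h' : Equiv.Perm E) x ≠ x} with hSS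
    have hdisp : ∀ x ∈ SS, ((f₄⁻¹ * ↑h' * f₄ : Equiv.Perm E)) x ∉ SS :=
      perm_displace (h' : Equiv.Perm E) f₄ SS hemp
    have hkey := perm_key (g : Equiv.Perm E) (h' : Equiv.Perm E)
      (f₄⁻¹ * ↑h' * f₄) SS hdisp
      (fun x hx => Set.mem_union_left _ hx)
      (fun x hx => Set.mem_union_right _ hx)
    set fh : ↥G := ⟨f₄, hf₄G⟩ with hfh
    set k : ↥G := fh⁻¹ * h' * fh with hk
    have hkcoe : (k : Equiv.Perm E) = f₄⁻¹ * ↑h' * f₄ := rfl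
    rw [← hkcoe] at hkey
    have heqG : g * h' * g⁻¹ * h'⁻¹
        = (g*k*g⁻¹*k⁻¹) * h' * (g*k*g⁻¹*k⁻¹)⁻¹ * h'⁻¹ := by
      apply Subtype.ext
      push_cast
      exact hkey
    have hX : (g*k*g⁻¹*k⁻¹) ∈ commutator ↥G := by
      rw [commutator_def]
      have := Subgroup.commutator_mem_commutator (Subgroup.mem_top g) (Subgroup.mem_top k)
      rwa [commutatorElement_def] at this
    rw [heqG]
    exact D.mul_mem (Subgroup.subset_closure ⟨_, hX, rfl⟩) (D.inv_mem hh'D)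
  -- D is normal in G
  have normalD : D.Normal := by
    constructor
    intro x hx g
    induction hx using Subgroup.closure_induction with
    | mem y hy =>
      obtain ⟨γ, hγ, rfl⟩ := hy
      have h1 : g * γ * g⁻¹ ∈ commutator ↥G := by
        have : (commutator ↥G).Normal := inferInstance
        exact this.conj_mem γ hγ g
      have h2 : g * h' * g⁻¹ ∈ D := by
        have e : g * h' * g⁻¹ = (g * h' * g⁻¹ * h'⁻¹) * h' := by group
        rw [e]; exact D.mul_mem (claim2 g) hh'D
      have e : g * (γ * h' * γ⁻¹) * g⁻¹
          = (g * γ * g⁻¹) * (g * h' * g⁻¹) * (g * γ * g⁻¹)⁻¹ := by group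
      rw [e]; exact hconjD _ h1 _ h2
    | one => simpa using D.one_mem
    | mul y z _ _ ihy ihz =>
      have e : g * (y * z) * g⁻¹ = (g * y * g⁻¹) * (g * z * g⁻¹) := by group
      rw [e]; exact D.mul_mem ihy ihz
    | inv y _ ihy =>
      have e : g * y⁻¹ * g⁻¹ = (g * y * g⁻¹)⁻¹ := by group
      rw [e]; exact D.inv_mem ihy
  -- claim 3 : all commutators [a, b] lie in D
  have claim3 : ∀ a b : ↥G, a * b * a⁻¹ * b⁻¹ ∈ D := by
    intro a b
    by_cases ha1 : a = 1
    · subst ha1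
      have e : (1 : ↥G) * b * 1⁻¹ * b⁻¹ = 1 := by group
      rw [e]; exact D.one_mem
    by_cases hb1 : b = 1
    · subst hb1
      have e : a * (1 : ↥G) * a⁻¹ * 1⁻¹ = 1 := by group
      rw [e]; exact D.one_mem
    have haPne : (a : Equiv.Perm E) ≠ 1 := fun he => ha1 (Subtype.ext he)
    have hbPne : (b : Equiv.Perm E) ≠ 1 := fun he => hb1 (Subtype.ext he)
    obtain ⟨f₄, hf₄G, hemp⟩ :=
      hyp (a : Equiv.Perm E) (b : Equiv.Perm E) (h' : Equiv.Perm E)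
        a.2 b.2 h'.2 haPne hbPne hh'Pne
    set SS : Set E :=
      {x | (a : Equiv.Perm E) x ≠ x} ∪ {x | (b : Equiv.Perm E) x ≠ x} with hSS
    have hdisp : ∀ x ∈ SS, ((f₄⁻¹ * ↑h' * f₄ : Equiv.Perm E)) x ∉ SS :=
      perm_displace (h' : Equiv.Perm E) f₄ SS hemp
    have hkey := perm_key (a : Equiv.Perm E) (b : Equiv.Perm E)
      (f₄⁻¹ * ↑h' * f₄) SS hdisp
      (fun x hx => Set.mem_union_left _ hx)
      (fun x hx => Set.mem_union_right _ hx)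
    set fh : ↥G := ⟨f₄, hf₄G⟩ with hfh
    set k : ↥G := fh⁻¹ * h' * fh with hk
    have hkcoe : (k : Equiv.Perm E) = f₄⁻¹ * ↑h' * f₄ := rfl
    rw [← hkcoe] at hkey
    have hkD : k ∈ D := by
      have := normalD.conj_mem h' hh'D fh⁻¹
      rwa [inv_inv] at this
    have heqG : a * b * a⁻¹ * b⁻¹
        = (a*k*a⁻¹*k⁻¹) * b * (a*k*a⁻¹*k⁻¹)⁻¹ * b⁻¹ := by
      apply Subtype.ext
      push_cast
      exact hkey
    have hXD : (a*k*a⁻¹*k⁻¹) ∈ D :=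
      D.mul_mem (normalD.conj_mem k hkD a) (D.inv_mem hkD)
    have e : (a*k*a⁻¹*k⁻¹) * b * (a*k*a⁻¹*k⁻¹)⁻¹ * b⁻¹
        = (a*k*a⁻¹*k⁻¹) * (b * (a*k*a⁻¹*k⁻¹)⁻¹ * b⁻¹) := by group
    rw [heqG, e]
    exact D.mul_mem hXD (normalD.conj_mem _ (D.inv_mem hXD) b)
  -- conclude
  have hDK : D ≤ Subgroup.map (commutator ↥G).subtype N := by
    rw [hD]
    refine (Subgroup.closure_le _).mpr ?_
    rintro x ⟨γ, hγ, rfl⟩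
    refine ⟨⟨γ, hγ⟩ * h₀ * ⟨γ, hγ⟩⁻¹, hN.conj_mem h₀ hh₀N ⟨γ, hγ⟩, ?_⟩
    simp [Subgroup.coe_mul, Subgroup.coe_inv, hh'def]
  have hcomm_le : commutator ↥G ≤ Subgroup.map (commutator ↥G).subtype N := by
    have h2 : (⁅(⊤ : Subgroup ↥G), ⊤⁆ : Subgroup ↥G)
        ≤ Subgroup.map (commutator ↥G).subtype N := by
      refine Subgroup.commutator_le.mpr ?_
      intro a _ b _
      rw [commutatorElement_def]
      exact hDK (claim3 a b)
    exact le_trans (le_of_eq (commutator_def ↥G)) h2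
  rw [Subgroup.eq_top_iff']
  intro x
  obtain ⟨y, hyN, hyx⟩ := hcomm_le x.2
  have : y = x := Subtype.ext hyx
  rwa [← this]
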